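/- The map sending a word w in the free monoid on two generators {L, R} to the rational f(φ(w)) = (a+b)/(c+d), where φ(w) = [[a,b],[c,d]] is the corresponding product of L = [[1,0],[1,1]] and R = [[1,1],[0,1]], is a bijection from such words onto the positive rationals. -/

import Mathlib

open Matrix

def SL2N (M : Matrix (Fin 2) (Fin 2) ℤ) : Prop :=
  (∀ i j, 0 ≤ M i j) ∧ M.det = 1

def Lmat : Matrix (Fin 2) (Fin 2) ℤ := !![1, 0; 1, 1]

def Rmat : Matrix (Fin 2) (Fin 2) ℤ := !![1, 1; 0, 1]

def matOf (w : List Bool) : Matrix (Fin 2) (Fin 2) ℤ :=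
  w.foldl (fun acc b => (if b then Rmat else Lmat) * acc) 1

def cwVal (M : Matrix (Fin 2) (Fin 2) ℤ) : ℚ :=
  ((M 0 0 + M 0 1 : ℤ) : ℚ) / ((M 1 0 + M 1 1 : ℤ) : ℚ)

namespace CW

def step (b : Bool) (p : ℤ × ℤ) : ℤ × ℤ :=
  if b then (p.1 + p.2, p.2) else (p.1, p.1 + p.2)

def pr : List Bool → ℤ × ℤ
  | [] => (1, 1)
  | b :: t => step b (pr t)

lemma matOf_snoc (w : List Bool) (b : Bool) :
    matOf (w ++ [b]) = (if b then Rmat else Lmat) * matOf w := by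
  simp [matOf, List.foldl_append]

lemma key (w : List Bool) :
    (matOf w 0 0 + matOf w 0 1, matOf w 1 0 + matOf w 1 1) = pr w.reverse := by
  induction w using List.reverseRecOn with
  | nil => simp [matOf, pr, Matrix.one_apply]
  | append_singleton w b ih =>
    rw [matOf_snoc]
    cases b <;>
      simp only [List.reverse_append, List.reverse_singleton, List.singleton_append, pr, step,
        ← ih, if_true, if_false, Bool.false_eq_true] <;>
      simp [Lmat, Rmat, Matrix.mul_apply, Fin.sum_univ_two] <;> ring_nf

lemma pr_pos (u : List Bool) : 0 < (pr u).1 ∧ 0 < (pr u).2 := by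
  induction u with
  | nil => simp [pr]
  | cons b t ih => cases b <;> simp [pr, step] <;> omega

lemma pr_coprime (u : List Bool) : Int.gcd (pr u).1 (pr u).2 = 1 := by
  induction u with
  | nil => simp [pr]
  | cons b t ih =>
    rw [← Int.isCoprime_iff_gcd_eq_one] at ih ⊢
    cases b <;> simp only [pr, step, if_true, if_false, Bool.false_eq_true]
    · simpa [add_comm] using ih.add_mul_left_right 1
    · simpa using ih.add_mul_right_left 1

lemma pr_inj : ∀ u v : List Bool, pr u = pr v → u = v := by
  intro u
  induction u with
  | nil =>
    intro v h
    cases v with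
    | nil => rfl
    | cons b t =>
      exfalso
      have ht := pr_pos t
      cases b <;> simp [pr, step, Prod.ext_iff] at h <;> omega
  | cons b t ih =>
    intro v h
    cases v with
    | nil =>
      exfalso
      have ht := pr_pos t
      cases b <;> simp [pr, step, Prod.ext_iff] at h <;> omega
    | cons b' t' =>
      have ht := pr_pos t
      have ht' := pr_pos t'
      cases b <;> cases b' <;>
        simp only [pr, step, if_true, if_false, Bool.false_eq_true, Prod.ext_iff] at h
      · have : pr t = pr t' := Prod.ext (by omega) (by omega)
        rw [ih t' this]
      · omega
      · omega
      · have : pr t = pr t' := Prod.ext (by omega) (by omega)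
        rw [ih t' this]

lemma pr_surj_aux : ∀ n : ℕ, ∀ p q : ℤ, 0 < p → 0 < q → Int.gcd p q = 1 →
    p + q ≤ n → ∃ u, pr u = (p, q) := by
  intro n
  induction n with
  | zero => intro p q hp hq _ hn; omega
  | succ n ih =>
    intro p q hp hq hg hn
    rcases lt_trichotomy p q with h | h | h
    · have hg' : Int.gcd p (q - p) = 1 := by
        rw [← Int.isCoprime_iff_gcd_eq_one] at hg ⊢
        have := IsCoprime.add_mul_left_right hg (-1)
        simpa [mul_comm, ← sub_eq_add_neg] using this
      obtain ⟨u, hu⟩ := ih p (q - p) hp (by omega) hg' (by omega)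
      exact ⟨false :: u, by simp [pr, step, hu]⟩
    · subst h
      have hp1 : p.natAbs = 1 := by simpa [Int.gcd_self] using hg
      exact ⟨[], by simp [pr, Prod.ext_iff]; omega⟩
    · have hg' : Int.gcd (p - q) q = 1 := by
        rw [← Int.isCoprime_iff_gcd_eq_one] at hg ⊢
        have := IsCoprime.add_mul_right_left hg (-1)
        simpa [mul_comm, ← sub_eq_add_neg] using this
      obtain ⟨u, hu⟩ := ih (p - q) q (by omega) hq hg' (by omega)
      exact ⟨true :: u, by simp [pr, step, hu]⟩

lemma rat_unique {p q p' q' : ℤ} (hp : 0 < p) (hq : 0 < q) (hp' : 0 < p') (hq' : 0 < q')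
    (hg : Int.gcd p q = 1) (hg' : Int.gcd p' q' = 1)
    (h : (p : ℚ) / q = (p' : ℚ) / q') : p = p' ∧ q = q' := by
  rw [div_eq_div_iff (by exact_mod_cast hq.ne') (by exact_mod_cast hq'.ne')] at h
  have hcross : p * q' = p' * q := by exact_mod_cast h
  rw [← Int.isCoprime_iff_gcd_eq_one] at hg hg'
  have h1 : q ∣ q' := by
    have : q ∣ p * q' := ⟨p', by linarith [hcross]⟩
    exact (hg.symm.dvd_of_dvd_mul_left this)
  have h2 : q' ∣ q := by
    have : q' ∣ p' * q := ⟨p, by linarith [hcross]⟩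
    exact (hg'.symm.dvd_of_dvd_mul_left this)
  have hqq : q = q' := Int.dvd_antisymm hq.le hq'.le h1 h2
  refine ⟨?_, hqq⟩
  rw [hqq] at hcross
  exact mul_right_cancel₀ hq'.ne' hcross

end CW

open CW

/-- The map w ↦ (a+b)/(c+d) for matOf w = [[a,b],[c,d]] is a bijection from
words onto the positive rationals. -/
theorem stmt4 :
    (∀ w : List Bool, 0 < cwVal (matOf w)) ∧
    (∀ q : ℚ, 0 < q → ∃! w : List Bool, cwVal (matOf w) = q) := by
  have hval : ∀ w : List Bool, cwVal (matOf w) =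
      ((pr w.reverse).1 : ℚ) / ((pr w.reverse).2 : ℚ) := by
    intro w
    have := key w
    rw [cwVal, ← this]
  constructor
  · intro w
    rw [hval]
    have h := pr_pos w.reverse
    exact div_pos (by exact_mod_cast h.1) (by exact_mod_cast h.2)
  · intro q hq
    have hnum : 0 < q.num := Rat.num_pos.mpr hq
    have hden : 0 < (q.den : ℤ) := by exact_mod_cast q.pos
    have hcop : Int.gcd q.num (q.den : ℤ) = 1 := q.reduced
    obtain ⟨u, hu⟩ := pr_surj_aux (q.num + q.den).toNat q.num q.den hnum hden hcop (by omega)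
    refine ⟨u.reverse, ?_, ?_⟩
    · show cwVal (matOf u.reverse) = q
      rw [hval, List.reverse_reverse, hu]
      exact_mod_cast Rat.num_div_den q
    · intro w hw
      rw [hval] at hw
      have hp := pr_pos w.reverse
      have hc := pr_coprime w.reverse
      have hq' : ((pr w.reverse).1 : ℚ) / ((pr w.reverse).2 : ℚ) = (q.num : ℚ) / (q.den : ℚ) := by
        rw [hw]; exact_mod_cast (Rat.num_div_den q).symm
      obtain ⟨h1, h2⟩ := rat_unique hp.1 hp.2 hnum hden hc hcop hq'
      have : pr w.reverse = pr u := by rw [hu]; exact Prod.ext h1 h2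
      have := pr_inj _ _ this
      rw [← List.reverse_reverse w, this]
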